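/- For a continuous linear operator T on a topological vector space X and n ∈ ℕ, T has the positive shadowing property if and only if T^n has the positive shadowing property. -/

import Mathlib

/-- The positive shadowing property for a map on a topological vector space, with respect to
balanced neighborhoods of 0. -/
def PosShadowing (𝕜 : Type*) {X : Type*} [NontriviallyNormedField 𝕜] [AddCommGroup X]
    [Module 𝕜 X] [TopologicalSpace X] (T : X → X) : Prop :=
  ∀ V ∈ nhds (0 : X), Balanced 𝕜 V → ∃ U ∈ nhds (0 : X), Balanced 𝕜 U ∧
    ∀ x : ℕ → X, (∀ j : ℕ, T (x j) - x (j + 1) ∈ U) →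
      ∃ y : X, ∀ j : ℕ, x j - T^[j] y ∈ V

section Aux

set_option linter.unusedSectionVars false

variable {𝕜 X : Type*} [NontriviallyNormedField 𝕜] [AddCommGroup X] [Module 𝕜 X]
    [TopologicalSpace X] [IsTopologicalAddGroup X] [ContinuousSMul 𝕜 X]

lemma iter_sub (T : X →L[𝕜] X) (r : ℕ) (a b : X) :
    T^[r] (a - b) = T^[r] a - T^[r] b := by
  rw [← ContinuousLinearMap.coe_pow']; exact map_sub _ _ _

lemma iter_zero (T : X →L[𝕜] X) (r : ℕ) : T^[r] (0 : X) = 0 :=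
  Function.iterate_fixed (map_zero T) r

/-- Telescoping identity for pseudotrajectory errors. -/
lemma telescope (T : X →L[𝕜] X) (x : ℕ → X) (a : ℕ) : ∀ m : ℕ,
    T^[m] (x a) - x (a + m) =
      ∑ k ∈ Finset.range m, T^[m - 1 - k] (T (x (a + k)) - x (a + k + 1)) := by
  intro m
  induction m with
  | zero => simp
  | succ m ih =>
    have h1 : T^[m + 1] (x a) - x (a + (m + 1)) =
        T (T^[m] (x a) - x (a + m)) + (T (x (a + m)) - x (a + m + 1)) := by
      rw [Function.iterate_succ_apply', map_sub, ← Nat.add_assoc]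
      abel
    rw [h1, ih, map_sum, Finset.sum_range_succ]
    congr 1
    · refine Finset.sum_congr rfl fun k hk => ?_
      have hk' := Finset.mem_range.mp hk
      rw [show m + 1 - 1 - k = (m - 1 - k) + 1 by omega, Function.iterate_succ_apply']
    · simp

/-- One can choose a balanced neighborhood so that weighted sums of its elements
land in a prescribed neighborhood. -/
lemma sum_lemma (T : X →L[𝕜] X) (m : ℕ) (N : Set X) (hN : N ∈ nhds (0 : X)) :
    ∃ U ∈ nhds (0 : X), Balanced 𝕜 U ∧
      ∀ g : ℕ → X, (∀ k, g k ∈ U) → ∑ k ∈ Finset.range m, T^[k] (g k) ∈ N := by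
  induction m generalizing N with
  | zero =>
    obtain ⟨U, ⟨hU, hUb⟩, -⟩ := (nhds_basis_balanced 𝕜 X).mem_iff.mp hN
    exact ⟨U, hU, hUb, fun g _ => by simpa using mem_of_mem_nhds hN⟩
  | succ m ih =>
    obtain ⟨W, hW, hWadd⟩ := exists_nhds_zero_half hN
    obtain ⟨U₁, hU₁, hU₁b, hU₁s⟩ := ih W hW
    have hpre : (T^[m]) ⁻¹' W ∈ nhds (0 : X) := by
      have hc : Continuous (T^[m]) := T.continuous.iterate m
      have := hc.continuousAt (x := (0 : X))
      rw [ContinuousAt, iter_zero] at this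
      exact this hW
    obtain ⟨U, ⟨hU, hUb⟩, hUsub⟩ :=
      (nhds_basis_balanced 𝕜 X).mem_iff.mp (Filter.inter_mem hU₁ hpre)
    refine ⟨U, hU, hUb, fun g hg => ?_⟩
    rw [Finset.sum_range_succ]
    exact hWadd _ (hU₁s g fun k => (hUsub (hg k)).1) _ (hUsub (hg m)).2

end Aux

/-- T has the positive shadowing property iff T^n does. -/
theorem stmt18 {𝕜 X : Type*} [NontriviallyNormedField 𝕜] [AddCommGroup X] [Module 𝕜 X]
    [TopologicalSpace X] [IsTopologicalAddGroup X] [ContinuousSMul 𝕜 X] (T : X →L[𝕜] X)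
    (n : ℕ) (hn : 0 < n) :
    PosShadowing 𝕜 (⇑T) ↔ PosShadowing 𝕜 (⇑(T ^ n)) := by
  have hTn : ⇑(T ^ n) = T^[n] := ContinuousLinearMap.coe_pow' T n
  have hTstep : ∀ (j : ℕ) (w : X), T (T^[j] w) = T^[j + 1] w := fun j w =>
    (Function.iterate_succ_apply' T j w).symm
  constructor
  · -- forward direction
    intro h V hV hVb
    obtain ⟨U, hU, hUb, hUsh⟩ := h V hV hVb
    refine ⟨U, hU, hUb, fun x hx => ?_⟩
    -- interleaved trajectory
    set z : ℕ → X := fun k => T^[k % n] (x (k / n)) with hz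
    have hzps : ∀ k : ℕ, T (z k) - z (k + 1) ∈ U := by
      intro k
      rcases lt_or_ge (k % n + 1) n with hr | hr
      · have hk1 : k + 1 = (k % n + 1) + n * (k / n) := by
          conv_lhs => rw [← Nat.div_add_mod k n]
          ring
        have h1 : (k + 1) % n = k % n + 1 := by
          rw [hk1, Nat.add_mul_mod_self_left, Nat.mod_eq_of_lt hr]
        have h2 : (k + 1) / n = k / n := by
          rw [hk1, Nat.add_mul_div_left _ _ hn, Nat.div_eq_of_lt hr, Nat.zero_add]
        have heq : T (z k) - z (k + 1) = 0 := by
          simp only [hz]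
          rw [h1, h2, hTstep]
          exact sub_self _
        rw [heq]
        exact mem_of_mem_nhds hU
      · have hrn : k % n + 1 = n := by have := Nat.mod_lt k hn; omega
        have hk1 : k + 1 = 0 + n * (k / n + 1) := by
          conv_lhs => rw [← Nat.div_add_mod k n]
          rw [Nat.zero_add, Nat.mul_add, Nat.mul_one, Nat.add_assoc, hrn]
        have h1 : (k + 1) % n = 0 := by
          rw [hk1, Nat.add_mul_mod_self_left, Nat.zero_mod]
        have h2 : (k + 1) / n = k / n + 1 := by
          rw [hk1, Nat.add_mul_div_left _ _ hn, Nat.zero_div, Nat.zero_add]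
        have heq : T (z k) - z (k + 1) = (T ^ n) (x (k / n)) - x (k / n + 1) := by
          simp only [hz]
          rw [h1, h2, Function.iterate_zero_apply, hTstep (k % n) (x (k / n)), hrn, hTn]
        rw [heq]
        exact hx (k / n)
    obtain ⟨y, hy⟩ := hUsh z hzps
    refine ⟨y, fun j => ?_⟩
    have h0 := hy (n * j)
    have hzj : z (n * j) = x j := by
      simp [hz, Nat.mul_mod_right, Nat.mul_div_cancel_left j hn]
    rw [hzj] at h0
    rw [hTn, ← Function.iterate_mul]
    exact h0
  · -- backward direction
    intro h V hV hVb
    obtain ⟨W₀, hW₀, hW₀add⟩ := exists_nhds_zero_half hV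
    obtain ⟨W, ⟨hW, hWb⟩, hWsub⟩ := (nhds_basis_balanced 𝕜 X).mem_iff.mp hW₀
    -- V' : balanced nbhd with T^[i] '' V' ⊆ W for i < n
    have hSmem : (⋂ i ∈ Finset.range n, (T^[i]) ⁻¹' W) ∈ nhds (0 : X) := by
      refine (Filter.biInter_finset_mem _).mpr fun i _ => ?_
      have hc : Continuous (T^[i]) := T.continuous.iterate i
      have := hc.continuousAt (x := (0 : X))
      rw [ContinuousAt, iter_zero] at this
      exact this hW
    obtain ⟨V', ⟨hV', hV'b⟩, hV'sub⟩ := (nhds_basis_balanced 𝕜 X).mem_iff.mp hSmem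
    obtain ⟨U', hU', hU'b, hU'sh⟩ := h V' hV' hV'b
    obtain ⟨U, hU, hUb, hUs⟩ := sum_lemma T n (U' ∩ W) (Filter.inter_mem hU' hW)
    refine ⟨U, hU, hUb, fun x hx => ?_⟩
    -- key: reflected sums of errors lie in U' ∩ W
    have key : ∀ (a r : ℕ), r ≤ n → ∀ e : ℕ → X, (∀ k, e k ∈ U) →
        ∑ k ∈ Finset.range r, T^[r - 1 - k] (e (a + k)) ∈ U' ∩ W := by
      intro a r hr e he
      set g : ℕ → X := fun k => if k < r then e (a + (r - 1 - k)) else 0 with hg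
      have hgU : ∀ k, g k ∈ U := by
        intro k
        simp only [hg]
        split
        · exact he _
        · exact mem_of_mem_nhds hU
      have h1 : ∑ k ∈ Finset.range r, T^[r - 1 - k] (e (a + k)) =
          ∑ k ∈ Finset.range r, T^[k] (g k) := by
        refine (Finset.sum_congr rfl fun k hk => ?_).trans
          (Finset.sum_range_reflect (fun k => T^[k] (g k)) r)
        have hk' := Finset.mem_range.mp hk
        have harg : a + (r - 1 - (r - 1 - k)) = a + k := by omega
        simp only [hg]
        rw [if_pos (show r - 1 - k < r by omega), harg]
      have h2 : ∑ k ∈ Finset.range r, T^[k] (g k) =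
          ∑ k ∈ Finset.range n, T^[k] (g k) := by
        refine Finset.sum_subset (Finset.range_subset_range.mpr hr) fun k _ hk => ?_
        rw [Finset.mem_range, not_lt] at hk
        simp only [hg]
        rw [if_neg (Nat.not_lt.mpr hk)]
        exact iter_zero T k
      rw [h1, h2]
      exact hUs g hgU
    -- x (n * ·) is a U'-pseudotrajectory for T^n
    have hyps : ∀ j : ℕ, (T ^ n) (x (n * j)) - x (n * (j + 1)) ∈ U' := by
      intro j
      have htel := telescope T x (n * j) n
      rw [show n * j + n = n * (j + 1) by ring] at htel
      rw [hTn, htel]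
      exact (key (n * j) n le_rfl (fun k => T (x k) - x (k + 1)) hx).1
    obtain ⟨z, hshad⟩ := hU'sh (fun j => x (n * j)) hyps
    refine ⟨z, fun m => ?_⟩
    -- decompose m = r + n * q
    set q := m / n with hq
    set r := m % n with hr
    have hrn : r < n := hr ▸ Nat.mod_lt m hn
    have hm : m = r + n * q := by
      rw [hr, hq]
      exact (Nat.mod_add_div m n).symm
    have hzq : x (n * q) - T^[n * q] z ∈ V' := by
      have := hshad q
      rwa [hTn, ← Function.iterate_mul] at this
    have hpiece2 : T^[r] (x (n * q)) - T^[m] z ∈ W := by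
      rw [show T^[m] z = T^[r] (T^[n * q] z) by rw [hm]; exact Function.iterate_add_apply _ _ _ _,
        ← iter_sub]
      have hmem := hV'sub hzq
      simp only [Set.mem_iInter, Set.mem_preimage] at hmem
      exact hmem r (Finset.mem_range.mpr hrn)
    have hpiece1 : x m - T^[r] (x (n * q)) ∈ W := by
      have hmem : T^[r] (x (n * q)) - x m ∈ W := by
        have htel := telescope T x (n * q) r
        rw [show n * q + r = m by rw [hm, Nat.add_comm]] at htel
        rw [htel]
        exact (key (n * q) r hrn.le (fun k => T (x k) - x (k + 1)) hx).2
      have hneg : x m - T^[r] (x (n * q)) = (-1 : 𝕜) • (T^[r] (x (n * q)) - x m) := by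
        rw [neg_smul, one_smul]
        abel
      rw [hneg]
      exact hWb.smul_mem (by simp) hmem
    have hdec : x m - T^[m] z = (x m - T^[r] (x (n * q))) + (T^[r] (x (n * q)) - T^[m] z) := by
      abel
    rw [hdec]
    exact hW₀add _ (hWsub hpiece1) _ (hWsub hpiece2)
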